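/- Let k be a field of characteristic 0, 𝔐 a monomial group, and (ε_i)_{i∈I} a family in k[[𝔐]]^{≺1}. Then (ε_i)_{i∈I} is summable if and only if (log(1+ε_i))_{i∈I} is summable. -/

import Mathlib

noncomputable section

open Classical

namespace LogHyp

universe u v w

/-- A subset of a totally ordered set is *well-based* if it contains no infinite
strictly increasing sequence. -/
def WellBased {M : Type u} [Preorder M] (S : Set M) : Prop :=
  ¬ ∃ f : ℕ → M, StrictMono f ∧ ∀ n, f n ∈ S

theorem wellBased_isPWO {M : Type u} [LinearOrder M] {S : Set Mᵒᵈ}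
    (h : WellBased (OrderDual.toDual ⁻¹' S)) : S.IsPWO := by
  rw [Set.isPWO_iff_isWF, Set.isWF_iff_no_descending_seq]
  intro f hf hmem
  exact h ⟨fun n => OrderDual.ofDual (f n), fun a b hab => hf hab, hmem⟩

/-- A family in a field of well-based series (series with monomials in `Mᵒᵈ`,
so that supports are well-based as subsets of `M`) is summable if the union of
the supports is well-based and each monomial lies in the support of only
finitely many members. -/
def IsSummable {M : Type u} [LinearOrder M] {R : Type v} [Zero R] {ι : Type w}
    (f : ι → HahnSeries Mᵒᵈ R) : Prop :=
  WellBased (OrderDual.toDual ⁻¹' (⋃ i, (f i).support)) ∧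
    ∀ g : Mᵒᵈ, {i | (f i).coeff g ≠ 0}.Finite

/-- The sum of a summable family (junk value `0` if the family is not summable). -/
noncomputable def famSum {M : Type u} [LinearOrder M] {R : Type v} [AddCommMonoid R] {ι : Type w}
    (f : ι → HahnSeries Mᵒᵈ R) : HahnSeries Mᵒᵈ R :=
  if h : IsSummable f then
    (⟨f, wellBased_isPWO h.1, h.2⟩ : HahnSeries.SummableFamily Mᵒᵈ R ι).hsum
  else 0

/-- Strongly `k`-linear maps between fields of well-based series:
`k`-linear maps sending summable families to summable families, preserving sums. -/
def IsStronglyLinear {k : Type v} [Semiring k] {M : Type u} {N : Type w}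
    [LinearOrder M] [LinearOrder N]
    (Φ : HahnSeries Mᵒᵈ k → HahnSeries Nᵒᵈ k) : Prop :=
  (∀ (c : k) (f : HahnSeries Mᵒᵈ k), Φ (c • f) = c • Φ f) ∧
  (∀ f g, Φ (f + g) = Φ f + Φ g) ∧
  ∀ {ι : Type u} (f : ι → HahnSeries Mᵒᵈ k), IsSummable f →
    IsSummable (fun i => Φ (f i)) ∧ Φ (famSum f) = famSum fun i => Φ (f i)

/-- `f ≺ g`: the dominant monomial of `f` is smaller than that of `g`
(with `𝔡 0` below all monomials). -/
def prec {M : Type u} [LinearOrder M] {R : Type v} [Zero R]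
    (f g : HahnSeries Mᵒᵈ R) : Prop :=
  g ≠ 0 ∧ ∀ m ∈ f.support, ∃ n ∈ g.support,
    (OrderDual.ofDual m : M) < OrderDual.ofDual n

/-- `f ⪯ g`: the dominant monomial of `f` is at most that of `g`. -/
def preceq {M : Type u} [LinearOrder M] {R : Type v} [Zero R]
    (f g : HahnSeries Mᵒᵈ R) : Prop :=
  ∀ m ∈ f.support, ∃ n ∈ g.support, (OrderDual.ofDual m : M) ≤ OrderDual.ofDual n

/-- The coefficient of the dominant (i.e. maximal) monomial of `f` (0 for `f = 0`). -/
noncomputable def leadCoeff {M : Type u} [LinearOrder M] {k : Type v} [Zero k]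
    (f : HahnSeries Mᵒᵈ k) : k :=
  if hf : f = 0 then 0
  else f.coeff (f.isWF_support.min (HahnSeries.support_nonempty_iff.mpr hf))

/-- `f > 0` for real well-based series: the leading coefficient is positive. -/
def SPos {M : Type u} [LinearOrder M] (f : HahnSeries Mᵒᵈ ℝ) : Prop := 0 < leadCoeff f

/-- The ordering of real well-based series: `f < g` iff `g - f` has positive
leading coefficient. -/
def SLt {M : Type u} [LinearOrder M] (f g : HahnSeries Mᵒᵈ ℝ) : Prop := SPos (g - f)

/-- `f > ℝ` : `f` exceeds every real constant. -/
def gtR {M : Type u} [AddCommGroup M] [LinearOrder M] [IsOrderedAddMonoid M] (f : HahnSeries Mᵒᵈ ℝ) : Prop :=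
  ∀ r : ℝ, SLt (HahnSeries.C r) f

/-- `log(1+ε) = ∑_{n≥1} (-1)^{n-1} ε^n / n`, for `ε ≺ 1`. -/
noncomputable def log1p {M : Type u} [AddCommGroup M] [LinearOrder M] [IsOrderedAddMonoid M] {k : Type v} [Field k]
    (ε : HahnSeries Mᵒᵈ k) : HahnSeries Mᵒᵈ k :=
  famSum fun n : ℕ => ((-1 : k) ^ n / ((n : k) + 1)) • ε ^ (n + 1)

/-- `exp(ε) = ∑_{n≥0} ε^n / n!`, for `ε ≺ 1`. -/
noncomputable def expS {M : Type u} [AddCommGroup M] [LinearOrder M] [IsOrderedAddMonoid M] {k : Type v} [Field k]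
    (f : HahnSeries Mᵒᵈ k) : HahnSeries Mᵒᵈ k :=
  famSum fun n : ℕ => ((n.factorial : k))⁻¹ • f ^ n

/-- The operator support of a linear operator: the smallest set `𝔖` of monomials with
`supp S(m) ⊆ 𝔖·m` for all monomials `m`. -/
def opSupport {M : Type u} [AddCommGroup M] [LinearOrder M] [IsOrderedAddMonoid M] {k : Type v} [Zero k] [One k]
    (S : HahnSeries Mᵒᵈ k → HahnSeries Mᵒᵈ k) : Set Mᵒᵈ :=
  ⋃ m : Mᵒᵈ, (fun g => g - m) '' (S (HahnSeries.single m 1)).support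



/-- The ordinals below `α`. -/
abbrev Idx (α : Ordinal.{0}) : Type 1 := {β : Ordinal.{0} // β < α}

/-- The monomial group `𝔏_{<α}`, written additively: a logarithmic hypermonomial
`ℓ^r = ∏_{β<α} ℓ_β^{r_β}` is identified with its exponent sequence `r`, and the
group is ordered lexicographically. -/
abbrev Mon (α : Ordinal.{0}) : Type 1 := Lex (Idx α → ℝ)

/-- The field `𝕃_{<α} = ℝ[[𝔏_{<α}]]` of logarithmic hyperseries: well-based series
with real coefficients and monomials in `𝔏_{<α}` (we use the order dual so that
supports are well-based, i.e. reverse well-ordered, subsets of `𝔏_{<α}`). -/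
abbrev LSeries (α : Ordinal.{0}) : Type 1 := HahnSeries (Mon α)ᵒᵈ ℝ

/-- The monomial `ℓ^r` as an element of the (dualised) monomial group. -/
def monExp (α : Ordinal.{0}) (r : Idx α → ℝ) : (Mon α)ᵒᵈ := OrderDual.toDual (toLex r)

/-- The monomial `ℓ^r` as an element of `𝕃_{<α}`. -/
noncomputable def monS (α : Ordinal.{0}) (r : Idx α → ℝ) : LSeries α :=
  HahnSeries.single (monExp α r) 1

/-- The exponent sequence of the hyperlogarithm `ℓ_β`. -/
def ellExp (α β : Ordinal.{0}) : Idx α → ℝ := fun ρ => if ρ.1 = β then 1 else 0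

/-- The hyperlogarithm `ℓ_β` as an element of `𝕃_{<α}` (for `β < α`). -/
noncomputable def ell (α β : Ordinal.{0}) : LSeries α := monS α (ellExp α β)

/-- The exponent sequence of `ℓ_β' = ∏_{ρ<β} ℓ_ρ⁻¹`. -/
def derExp (α β : Ordinal.{0}) : Idx α → ℝ := fun ρ => if ρ.1 < β then -1 else 0

/-- The exponent sequence of `ℓ_β† = ∏_{ρ≤β} ℓ_ρ⁻¹`. -/
def dagExp (α β : Ordinal.{0}) : Idx α → ℝ := fun ρ => if ρ.1 ≤ β then -1 else 0

/-- `D` is *the* derivation of `𝕃_{<α}`: a strongly `ℝ`-linear derivation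
with `D ℓ_β = ∏_{ρ<β} ℓ_ρ⁻¹` for all `β < α`. -/
def IsDerL (α : Ordinal.{0}) (D : LSeries α → LSeries α) : Prop :=
  IsStronglyLinear D ∧ (∀ f g, D (f * g) = f * D g + g * D f) ∧
    ∀ β : Ordinal.{0}, β < α → D (ell α β) = monS α (derExp α β)

/-- The exponent sequence of the dominant monomial of `f` (0 if `f = 0`). -/
noncomputable def domExp (α : Ordinal.{0}) (f : LSeries α) : Idx α → ℝ :=
  if hf : f = 0 then 0
  else ofLex (OrderDual.ofDual
    (f.isWF_support.min (HahnSeries.support_nonempty_iff.mpr hf)))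

/-- The logarithm on `𝕃_{<α}^{>0}` (`α` a limit ordinal):
`log (c·ℓ^r·(1+ε)) = ∑_β r_β ℓ_{β+1} + log c + ∑_{n≥1} (-1)^{n-1} ε^n/n`. -/
noncomputable def logFn (α : Ordinal.{0}) (f : LSeries α) : LSeries α :=
  (famSum fun β : Idx α => domExp α f β • ell α (β.1 + 1))
    + HahnSeries.C (Real.log (leadCoeff f))
    + log1p (f * (HahnSeries.single (monExp α (domExp α f)) (leadCoeff f))⁻¹ - 1)

/-- The logarithmicity `λ_f`: the least `β` with `r_β ≠ 0`, where `𝔡(f) = ℓ^r`. -/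
noncomputable def lambdaOf (α : Ordinal.{0}) (f : LSeries α) : Ordinal.{0} :=
  sInf {β : Ordinal.{0} | ∃ h : β < α, domExp α f ⟨β, h⟩ ≠ 0}

/-- The coefficient of `ω^δ` in the Cantor normal form of `μ`. -/
noncomputable def cnfCoeff (μ δ : Ordinal.{0}) : ℕ :=
  Cardinal.toNat (Ordinal.card ((μ / Ordinal.omega0 ^ δ) % Ordinal.omega0))

/-- `λ_{g;ν}`: writing `λ_g = ω^{β₁}n₁ + ⋯ + ω^{β_k}n_k` in Cantor normal form,
this is `n_i` if `ν = ω^{β_i+1}`, and `0` for every other ordinal `ν`. -/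
noncomputable def lambdaCoeff (α : Ordinal.{0}) (g : LSeries α) (ν : Ordinal.{0}) : ℕ :=
  if h : ∃ δ : Ordinal.{0}, ν = Ordinal.omega0 ^ (δ + 1) then
    cnfCoeff (lambdaOf α g) h.choose
  else 0

/-- A composition on `𝕃_{<α}` (axioms (CL1)–(CL5)); `C f g` is `f ∘ g`,
subject to conditions only when the right argument is `> ℝ`. -/
def IsCompositionOp (α : Ordinal.{0}) (C : LSeries α → LSeries α → LSeries α) : Prop :=
  -- (CL1): for each g > ℝ, `f ↦ f ∘ g` is an ℝ-algebra homomorphism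
  (∀ g, gtR g →
    C 1 g = 1 ∧
    (∀ f₁ f₂, C (f₁ + f₂) g = C f₁ g + C f₂ g) ∧
    (∀ f₁ f₂, C (f₁ * f₂) g = C f₁ g * C f₂ g) ∧
    (∀ c : ℝ, C (HahnSeries.C c) g = HahnSeries.C c)) ∧
  -- (CL2)
  (∀ f, C f (ell α 0) = f) ∧
  (∀ g, gtR g → C (ell α 0) g = g) ∧
  -- (CL3)
  (∀ f g, gtR g → SPos f → C (logFn α f) g = logFn α (C f g)) ∧
  -- (CL4)
  (∀ g, gtR g → ∀ {ι : Type 1} (F : ι → LSeries α), IsSummable F →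
    IsSummable (fun i => C (F i) g) ∧ C (famSum F) g = famSum fun i => C (F i) g) ∧
  -- (CL5)
  (∀ f g h, gtR g → gtR h → C (C f g) h = C f (C g h))

/-- A composition admits Taylor expansion if for `g > ℝ` and `h ≺ g` the family
`(f⁽ⁿ⁾∘g)·hⁿ/n!` is summable with sum `f∘(g+h)`. -/
def AdmitsTaylor (α : Ordinal.{0}) (D : LSeries α → LSeries α)
    (C : LSeries α → LSeries α → LSeries α) : Prop :=
  ∀ f g h, gtR g → prec h g →
    IsSummable (fun n : ℕ => ((n.factorial : ℝ))⁻¹ • (C (D^[n] f) g * h ^ n)) ∧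
    C f (g + h) = famSum fun n : ℕ => ((n.factorial : ℝ))⁻¹ • (C (D^[n] f) g * h ^ n)

/-- The hyperlogarithm identities for a composition on `𝕃_{<ω^λ}`. -/
def HyperlogIds (lam : Ordinal.{0})
    (C : LSeries (Ordinal.omega0 ^ lam) → LSeries (Ordinal.omega0 ^ lam) →
      LSeries (Ordinal.omega0 ^ lam)) : Prop :=
  (∀ β γ : Ordinal.{0}, β < lam → γ < Ordinal.omega0 ^ (β + 1) →
      C (ell (Ordinal.omega0 ^ lam) γ) (ell (Ordinal.omega0 ^ lam) (Ordinal.omega0 ^ β))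
        = ell (Ordinal.omega0 ^ lam) (Ordinal.omega0 ^ β + γ)) ∧
  (∀ β : Ordinal.{0}, β < lam →
      C (ell (Ordinal.omega0 ^ lam) (Ordinal.omega0 ^ (β + 1)))
          (ell (Ordinal.omega0 ^ lam) (Ordinal.omega0 ^ β))
        = ell (Ordinal.omega0 ^ lam) (Ordinal.omega0 ^ (β + 1)) - 1) ∧
  (∀ β γ : Ordinal.{0}, β < γ → γ < lam → Order.IsSuccLimit γ →
      (C (ell (Ordinal.omega0 ^ lam) (Ordinal.omega0 ^ γ))
          (ell (Ordinal.omega0 ^ lam) (Ordinal.omega0 ^ β))).coeff 0 = 0)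


/-! ### Auxiliary lemmas for Statement 11 -/

section Aux11

theorem wellBased_of_isPWO {M : Type u} [LinearOrder M] {S : Set Mᵒᵈ}
    (h : S.IsPWO) : WellBased (OrderDual.toDual ⁻¹' S) := by
  rw [Set.isPWO_iff_isWF] at h
  rintro ⟨f, hf, hmem⟩
  exact Set.isWF_iff_no_descending_seq.mp h (fun n => OrderDual.toDual (f n))
    (fun a b hab => hf hab) hmem

theorem isSummable_iff {M : Type u} [LinearOrder M] {R : Type v} [Zero R] {ι : Type w}
    {f : ι → HahnSeries Mᵒᵈ R} :
    IsSummable f ↔ (⋃ i, (f i).support).IsPWO ∧ ∀ g : Mᵒᵈ, {i | (f i).coeff g ≠ 0}.Finite :=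
  ⟨fun h => ⟨wellBased_isPWO h.1, h.2⟩, fun h => ⟨wellBased_of_isPWO h.1, h.2⟩⟩

theorem famSum_coeff {M : Type u} [LinearOrder M] {R : Type v} [AddCommMonoid R] {ι : Type w}
    {f : ι → HahnSeries Mᵒᵈ R} (h : IsSummable f) (g : Mᵒᵈ) :
    (famSum f).coeff g = ∑ᶠ i, (f i).coeff g := by
  rw [famSum, dif_pos h]
  exact HahnSeries.SummableFamily.coeff_hsum

theorem famSum_support_subset {M : Type u} [LinearOrder M] {R : Type v} [AddCommMonoid R]
    {ι : Type w} {f : ι → HahnSeries Mᵒᵈ R} (h : IsSummable f) :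
    (famSum f).support ⊆ ⋃ i, (f i).support := by
  rw [famSum, dif_pos h]
  exact HahnSeries.SummableFamily.support_hsum_subset

theorem nonneg_of_mem_closure {Γ : Type*} [AddCommMonoid Γ] [PartialOrder Γ] [IsOrderedAddMonoid Γ] {S : Set Γ}
    (hS : ∀ a ∈ S, 0 ≤ a) {b : Γ} (hb : b ∈ AddSubmonoid.closure S) : 0 ≤ b :=
  AddSubmonoid.closure_induction (fun x hx => hS x hx) le_rfl
    (fun _ _ _ _ hx hy => add_nonneg hx hy) hb

theorem exists_decomp_of_mem_closure {Γ : Type*} [AddCommMonoid Γ] {S : Set Γ} {g : Γ}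
    (hg : g ∈ AddSubmonoid.closure S) (hg0 : g ≠ 0) :
    ∃ a ∈ S, ∃ b ∈ (AddSubmonoid.closure S : Set Γ), a + b = g := by
  have key : g ≠ 0 → ∃ a ∈ S, ∃ b ∈ (AddSubmonoid.closure S : Set Γ), a + b = g := by
    refine AddSubmonoid.closure_induction ?_ ?_ ?_ hg
    · exact fun x hx _ => ⟨x, hx, 0, AddSubmonoid.zero_mem _, add_zero x⟩
    · exact fun h => absurd rfl h
    · rintro x y hx hy ihx ihy hxy
      by_cases hx0 : x = 0
      · subst hx0
        rw [zero_add] at hxy ⊢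
        exact ihy hxy
      · obtain ⟨a, ha, b, hb, rfl⟩ := ihx hx0
        exact ⟨a, ha, b + y, AddSubmonoid.add_mem _ hb hy, (add_assoc _ _ _).symm⟩
  exact key hg0

theorem support_pow_decomp {Γ : Type*} [AddCommMonoid Γ] [LinearOrder Γ] [IsOrderedCancelAddMonoid Γ] {R : Type*}
    [CommRing R] (x : HahnSeries Γ R) :
    ∀ n : ℕ, ∀ g ∈ (x ^ (n + 1)).support, ∃ a ∈ x.support,
      ∃ b ∈ (AddSubmonoid.closure x.support : Set Γ), a + b = g
  | 0, g, hg => ⟨g, by simpa using hg, 0, AddSubmonoid.zero_mem _, add_zero g⟩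
  | (n + 1), g, hg => by
    rw [show x ^ (n + 1 + 1) = x * x ^ (n + 1) from pow_succ' x (n + 1)] at hg
    obtain ⟨a, ha, b, hb, rfl⟩ := HahnSeries.support_mul_subset hg
    obtain ⟨a', ha', b', hb', rfl⟩ := support_pow_decomp x n b hb
    exact ⟨a, ha, a' + b', AddSubmonoid.add_mem _ (AddSubmonoid.subset_closure ha') hb',
      by exact rfl⟩

theorem support_pow_subset_closure {Γ : Type*} [AddCommMonoid Γ] [LinearOrder Γ] [IsOrderedCancelAddMonoid Γ] {R : Type*}
    [CommRing R] (x : HahnSeries Γ R) (n : ℕ) {g : Γ} (hg : g ∈ (x ^ (n + 1)).support) :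
    g ∈ (AddSubmonoid.closure x.support : Set Γ) := by
  obtain ⟨a, ha, b, hb, rfl⟩ := support_pow_decomp x n g hg
  exact AddSubmonoid.add_mem _ (AddSubmonoid.subset_closure ha) hb

theorem support_pow_pos {Γ : Type*} [AddCommMonoid Γ] [LinearOrder Γ] [IsOrderedCancelAddMonoid Γ] {R : Type*}
    [CommRing R] {x : HahnSeries Γ R} (hx : ∀ a ∈ x.support, 0 < a) (n : ℕ) :
    ∀ g ∈ (x ^ (n + 1)).support, 0 < g := by
  intro g hg
  obtain ⟨a, ha, b, hb, rfl⟩ := support_pow_decomp x n g hg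
  exact add_pos_of_pos_of_nonneg (hx a ha)
    (nonneg_of_mem_closure (fun c hc => (hx c hc).le) hb)

theorem orderTop_pos_of_support_pos {Γ : Type*} [AddCommMonoid Γ] [LinearOrder Γ] [IsOrderedCancelAddMonoid Γ]
    {R : Type*} [Zero R] {x : HahnSeries Γ R} (hx : ∀ a ∈ x.support, 0 < a) :
    0 < x.orderTop := by
  rcases eq_or_ne x 0 with rfl | h
  · rw [HahnSeries.orderTop_zero]
    exact Ne.lt_top (by simp)
  · rw [HahnSeries.orderTop_of_ne_zero h]
    exact WithTop.coe_pos.mpr (hx _ (x.isWF_support.min_mem _))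

variable {M : Type u} [AddCommGroup M] [LinearOrder M] [IsOrderedAddMonoid M] {k : Type v} [Field k]

theorem hahn_smul_support_subset (c : k) (x : HahnSeries Mᵒᵈ k) :
    (c • x).support ⊆ x.support := by
  intro g hg
  rw [HahnSeries.mem_support] at hg ⊢
  exact fun h => hg (by rw [HahnSeries.coeff_smul, h, smul_zero])

theorem isSummable_smul_pow {x : HahnSeries Mᵒᵈ k}
    (hx : ∀ a ∈ x.support, (0 : Mᵒᵈ) < a) (c : ℕ → k) :
    IsSummable fun n : ℕ => c n • x ^ (n + 1) := by
  have hxo : 0 < x.orderTop := orderTop_pos_of_support_pos hx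
  rw [isSummable_iff]
  constructor
  · refine (HahnSeries.SummableFamily.isPWO_iUnion_support_powers (HahnSeries.zero_le_orderTop_iff.mp hxo.le)).mono (Set.iUnion_subset fun n => ?_)
    exact (hahn_smul_support_subset _ _).trans
      (Set.subset_iUnion (fun m => (x ^ m).support) (n + 1))
  · intro g
    have hfin := (HahnSeries.SummableFamily.powers x).finite_co_support g
    have hsub : {n : ℕ | (c n • x ^ (n + 1)).coeff g ≠ 0} ⊆
        (fun n : ℕ => n + 1) ⁻¹' (Function.support fun m =>
          ((HahnSeries.SummableFamily.powers x) m).coeff g) := by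
      intro n hn
      simp only [Set.mem_setOf_eq, HahnSeries.coeff_smul, smul_eq_mul] at hn
      simp only [Set.mem_preimage, Function.mem_support,
        HahnSeries.SummableFamily.powers_of_orderTop_pos hxo]
      exact right_ne_zero_of_mul hn
    exact (hfin.preimage (fun a _ b _ h => by omega)).subset hsub

theorem log1p_coeff {x : HahnSeries Mᵒᵈ k} (hx : ∀ a ∈ x.support, (0 : Mᵒᵈ) < a) (g : Mᵒᵈ) :
    (log1p x).coeff g
      = ∑ᶠ n : ℕ, ((-1 : k) ^ n / ((n : k) + 1)) * (x ^ (n + 1)).coeff g := by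
  rw [log1p, famSum_coeff (isSummable_smul_pow hx _)]
  exact finsum_congr fun n => by rw [HahnSeries.coeff_smul, smul_eq_mul]

theorem log1p_support_subset {x : HahnSeries Mᵒᵈ k} (hx : ∀ a ∈ x.support, (0 : Mᵒᵈ) < a) :
    (log1p x).support ⊆ ⋃ n : ℕ, (x ^ (n + 1)).support := by
  rw [log1p]
  exact (famSum_support_subset (isSummable_smul_pow hx _)).trans
    (Set.iUnion_mono fun n => hahn_smul_support_subset _ _)

theorem log1p_support_decomp {x : HahnSeries Mᵒᵈ k} (hx : ∀ a ∈ x.support, (0 : Mᵒᵈ) < a) :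
    ∀ g ∈ (log1p x).support, ∃ a ∈ x.support,
      ∃ b ∈ (AddSubmonoid.closure x.support : Set Mᵒᵈ), a + b = g := by
  intro g hg
  obtain ⟨_, ⟨n, rfl⟩, hn⟩ := log1p_support_subset hx hg
  exact support_pow_decomp x n g hn

theorem log1p_support_pos {x : HahnSeries Mᵒᵈ k} (hx : ∀ a ∈ x.support, (0 : Mᵒᵈ) < a) :
    ∀ g ∈ (log1p x).support, (0 : Mᵒᵈ) < g := by
  intro g hg
  obtain ⟨_, ⟨n, rfl⟩, hn⟩ := log1p_support_subset hx hg
  exact support_pow_pos hx n g hn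

theorem coeff_log1p_or {x : HahnSeries Mᵒᵈ k} (hx : ∀ a ∈ x.support, (0 : Mᵒᵈ) < a)
    {g : Mᵒᵈ} (hg : x.coeff g ≠ 0) :
    (log1p x).coeff g ≠ 0 ∨ ∃ m : ℕ, (x ^ (m + 2)).coeff g ≠ 0 := by
  by_contra h
  push_neg at h
  obtain ⟨h1, h2⟩ := h
  have h3 : (log1p x).coeff g = x.coeff g := by
    rw [log1p_coeff hx g, finsum_eq_single _ 0 ?_]
    · simp
    · rintro (_ | m) hm
      · exact absurd rfl hm
      · rw [h2 m, mul_zero]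
  exact hg (h3 ▸ h1)

theorem support_subset_closure_log1p {x : HahnSeries Mᵒᵈ k}
    (hx : ∀ a ∈ x.support, (0 : Mᵒᵈ) < a) :
    x.support ⊆ (AddSubmonoid.closure (log1p x).support : Set Mᵒᵈ) := by
  have hU : (AddSubmonoid.closure x.support : Set Mᵒᵈ).IsPWO :=
    x.isWF_support.isPWO.addSubmonoid_closure fun a ha => (hx a ha).le
  have key : ∀ y ∈ (AddSubmonoid.closure x.support : Set Mᵒᵈ),
      ∀ n : ℕ, y ∈ (x ^ (n + 1)).support →
        y ∈ (AddSubmonoid.closure (log1p x).support : Set Mᵒᵈ) := by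
    intro y hy
    refine hU.isWF.induction hy
      (P := fun y => ∀ n : ℕ, y ∈ (x ^ (n + 1)).support →
        y ∈ (AddSubmonoid.closure (log1p x).support : Set Mᵒᵈ)) ?_
    intro z hz IH n hn
    have handle : ∀ m : ℕ, z ∈ (x ^ (m + 2)).support →
        z ∈ (AddSubmonoid.closure (log1p x).support : Set Mᵒᵈ) := by
      intro m hm
      rw [show x ^ (m + 2) = x * x ^ (m + 1) from pow_succ' x (m + 1)] at hm
      obtain ⟨a, ha, b, hb, rfl⟩ := HahnSeries.support_mul_subset hm
      have ha0 : (0 : Mᵒᵈ) < a := hx a ha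
      have hb0 : (0 : Mᵒᵈ) < b := support_pow_pos hx m b hb
      have h1 := IH a (AddSubmonoid.subset_closure ha) (lt_add_of_pos_right a hb0) 0
        (by rw [zero_add, pow_one]; exact ha)
      have h2 := IH b (support_pow_subset_closure x m hb) (lt_add_of_pos_left b ha0) m hb
      exact AddSubmonoid.add_mem _ h1 h2
    match n, hn with
    | 0, hn =>
      rcases coeff_log1p_or hx (by rw [zero_add, pow_one] at hn; exact hn) with hL | ⟨m, hm⟩
      · exact AddSubmonoid.subset_closure hL
      · exact handle m hm
    | m + 1, hn => exact handle m hn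
  intro g hg
  exact key g (AddSubmonoid.subset_closure hg) 0 (by rw [zero_add, pow_one]; exact hg)

theorem isSummable_transfer {ι : Type w} {F G : ι → HahnSeries Mᵒᵈ k}
    (hpos : ∀ i, ∀ g ∈ (F i).support, (0 : Mᵒᵈ) < g)
    (hdec : ∀ i, ∀ g ∈ (G i).support, ∃ a ∈ (F i).support,
      ∃ b ∈ (AddSubmonoid.closure (F i).support : Set Mᵒᵈ), a + b = g)
    (hF : IsSummable F) : IsSummable G := by
  rw [isSummable_iff] at hF ⊢
  obtain ⟨hT, hfin⟩ := hF
  have hT0 : ∀ a ∈ ⋃ i, (F i).support, (0 : Mᵒᵈ) ≤ a := by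
    intro a ha
    obtain ⟨_, ⟨i, rfl⟩, hi⟩ := ha
    exact (hpos i a hi).le
  have hC : (AddSubmonoid.closure (⋃ i, (F i).support) : Set Mᵒᵈ).IsPWO :=
    hT.addSubmonoid_closure hT0
  have hsub : ∀ i, (AddSubmonoid.closure (F i).support : Set Mᵒᵈ) ⊆
      (AddSubmonoid.closure (⋃ i, (F i).support) : Set Mᵒᵈ) := fun i =>
    AddSubmonoid.closure_mono (Set.subset_iUnion (fun j => (F j).support) i)
  constructor
  · refine hC.mono (Set.iUnion_subset fun i g hg => ?_)
    obtain ⟨a, ha, b, hb, rfl⟩ := hdec i g hg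
    exact AddSubmonoid.add_mem _
      (AddSubmonoid.subset_closure (Set.mem_iUnion.mpr ⟨i, ha⟩)) (hsub i hb)
  · intro g
    refine ((Finset.addAntidiagonal hT hC g).finite_toSet.biUnion
      (fun p (_ : p ∈ ↑(Finset.addAntidiagonal hT hC g)) => hfin p.1)).subset ?_
    intro i hi
    obtain ⟨a, ha, b, hb, hab⟩ := hdec i g hi
    have hmem : (a, b) ∈ (Finset.addAntidiagonal hT hC g : Set (Mᵒᵈ × Mᵒᵈ)) :=
      Finset.mem_coe.mpr (Finset.mem_addAntidiagonal.mpr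
        ⟨Set.mem_iUnion.mpr ⟨i, ha⟩, hsub i hb, hab⟩)
    exact Set.mem_biUnion hmem (show i ∈ {j | (F j).coeff a ≠ 0} from ha)

end Aux11

/-- For a family `(ε_i)` in `k[[𝔐]]^{≺1}` (`k` of characteristic 0):
`(ε_i)` is summable iff `(log(1+ε_i))` is summable. -/
theorem statement11 {k : Type} [Field k] [CharZero k] {M : Type}
    [AddCommGroup M] [LinearOrder M] [IsOrderedAddMonoid M] {ι : Type}
    (ε : ι → HahnSeries Mᵒᵈ k) (hε : ∀ i, prec (ε i) 1) :
    IsSummable ε ↔ IsSummable fun i => log1p (ε i) := by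
  have hpos : ∀ i, ∀ g ∈ (ε i).support, (0 : Mᵒᵈ) < g := by
    intro i g hg
    obtain ⟨h1, h2⟩ := hε i
    obtain ⟨n, hn, hlt⟩ := h2 g hg
    rw [HahnSeries.support_one, Set.mem_singleton_iff] at hn
    subst hn
    exact hlt
  constructor
  · intro h
    exact isSummable_transfer hpos (fun i => log1p_support_decomp (hpos i)) h
  · intro h
    refine isSummable_transfer (F := fun i => log1p (ε i))
      (fun i => log1p_support_pos (hpos i)) (fun i g hg => ?_) h
    exact exists_decomp_of_mem_closure (support_subset_closure_log1p (hpos i) hg)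
      (hpos i g hg).ne'

end LogHyp
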